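/- The spanning-path routing rule never revisits an edge: the path from source s to destination t produced by interval routing on the spanning tree uses each tree edge at most once (it is a simple path). -/

import Mathlib

/-- `u` is an ancestor of `w` (or equal to it) in the rooted tree given by the
`parent` function. -/
def IsAncestor {V : Type*} (parent : V → V) (u w : V) : Prop :=
  ∃ n : ℕ, parent^[n] w = u

/-- The subtree rooted at `u`: all vertices of which `u` is an ancestor. -/
def subtreeOf {V : Type*} (parent : V → V) (u : V) : Set V :=
  {w | IsAncestor parent u w}

/-- The maximum preorder label occurring in the subtree rooted at `u`. -/
noncomputable def maxRange {V : Type*} (parent : V → V) (spvc : V → ℕ) (u : V) : ℕ :=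
  sSup (spvc '' subtreeOf parent u)

theorem stmt_9 {V : Type*} [Fintype V] [DecidableEq V]
    (root : V) (parent : V → V) (spvc : V → ℕ)
    (hroot : parent root = root)
    (hreach : ∀ v, IsAncestor parent root v)
    (hinj : Function.Injective spvc)
    (hmono : ∀ v, v ≠ root → spvc (parent v) < spvc v)
    (hint : ∀ v, spvc '' subtreeOf parent v =
      Set.Icc (spvc v) (maxRange parent spvc v))
    (next : V → ℕ → V)
    (hnext : ∀ u d, (∃ c : V, parent c = u ∧ c ≠ u ∧
        d ∈ Set.Icc (spvc c) (maxRange parent spvc c) ∧ next u d = c) ∨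
      ((¬ ∃ c : V, parent c = u ∧ c ≠ u ∧
        d ∈ Set.Icc (spvc c) (maxRange parent spvc c)) ∧ next u d = parent u))
    (s t : V) (k : ℕ)
    (hreacht : (fun u => next u (spvc t))^[k] s = t)
    (hfirst : ∀ j < k, (fun u => next u (spvc t))^[j] s ≠ t) :
    (((List.range (k + 1)).map
      (fun i => (fun u => next u (spvc t))^[i] s)).Nodup) := by
  classical
  set f : V → V := fun u => next u (spvc t) with hfdef
  have hreach' : ∀ v, ∃ n, parent^[n] v = root := hreach
  -- basic monotonicity facts
  have hparent_le : ∀ v, spvc (parent v) ≤ spvc v := by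
    intro v
    by_cases hv : v = root
    · rw [hv, hroot]
    · exact (hmono v hv).le
  have hiter_le : ∀ n v, spvc (parent^[n] v) ≤ spvc v := by
    intro n
    induction n with
    | zero => simp
    | succ n ih =>
      intro v
      rw [Function.iterate_succ_apply]
      exact le_trans (ih (parent v)) (hparent_le v)
  -- interval membership ↔ subtree membership
  have hmem_iff : ∀ c, spvc t ∈ Set.Icc (spvc c) (maxRange parent spvc c) ↔
      t ∈ subtreeOf parent c := by
    intro c
    rw [← hint c]
    constructor
    · rintro ⟨w, hw, hwe⟩
      rwa [← hinj hwe]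
    · intro h; exact ⟨t, h, rfl⟩
  -- uniqueness of the child whose subtree contains t
  have aux : ∀ (u c c' : V) (a b : ℕ), a ≤ b → parent c = u → c ≠ u →
      parent c' = u → c' ≠ u → parent^[a] t = c → parent^[b] t = c' → c = c' := by
    intro u c c' a b hab hc hcne hc' hc'ne ha hb
    have h1 : parent^[b - a] c = c' := by
      rw [← ha, ← Function.iterate_add_apply, Nat.sub_add_cancel hab]
      exact hb
    rcases Nat.eq_zero_or_pos (b - a) with h0 | hpos
    · rw [h0] at h1; exact h1
    · obtain ⟨m, hm⟩ : ∃ m, b - a = m + 1 := ⟨b - a - 1, (Nat.succ_pred_eq_of_pos hpos).symm⟩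
      rw [hm, Function.iterate_succ_apply, hc] at h1
      have h2 : spvc c' ≤ spvc u := h1 ▸ hiter_le m u
      have hc'root : c' ≠ root := by
        intro hr
        rw [hr, hroot] at hc'
        exact hc'ne (hr.trans hc')
      have h3 : spvc u < spvc c' := by
        have := hmono c' hc'root
        rwa [hc'] at this
      exact absurd h2 (not_le.mpr h3)
  have hchild_unique : ∀ (u c c' : V), parent c = u → c ≠ u → parent c' = u → c' ≠ u →
      t ∈ subtreeOf parent c → t ∈ subtreeOf parent c' → c = c' := by
    rintro u c c' hc hcne hc' hc'ne ⟨a, ha⟩ ⟨b, hb⟩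
    rcases le_total a b with hab | hab
    · exact aux u c c' a b hab hc hcne hc' hc'ne ha hb
    · exact (aux u c' c b a hab hc' hc'ne hc hcne hb ha).symm
  -- subtree transfer upwards
  have hsub_up : ∀ c u, parent c = u → t ∈ subtreeOf parent c → t ∈ subtreeOf parent u := by
    rintro c u hc ⟨n, hn⟩
    exact ⟨n + 1, by rw [Function.iterate_succ_apply', hn, hc]⟩
  -- depth strictly decreases toward root
  have hdpt_parent : ∀ u, u ≠ root →
      Nat.find (hreach' (parent u)) < Nat.find (hreach' u) := by
    intro u hu
    have h1 : 0 < Nat.find (hreach' u) := by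
      rcases Nat.eq_zero_or_pos (Nat.find (hreach' u)) with h | h
      · have hs := Nat.find_spec (hreach' u)
        rw [h] at hs
        exact absurd hs hu
      · exact h
    have h2 : parent^[Nat.find (hreach' u) - 1] (parent u) = root := by
      have h5 := Nat.find_spec (hreach' u)
      have h6 : Nat.find (hreach' u) = (Nat.find (hreach' u) - 1) + 1 := by omega
      rw [h6, Function.iterate_succ_apply] at h5
      exact h5
    exact lt_of_le_of_lt (Nat.find_le h2) (Nat.sub_lt h1 one_pos)
  -- distance to t is at most depth of t
  have hdist_le : ∀ (v : V) (h : ∃ n, parent^[n] t = v),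
      Nat.find h ≤ Nat.find (hreach' t) := by
    intro v h
    by_cases hv : v = root
    · exact Nat.find_le (by rw [Nat.find_spec (hreach' t), hv])
    · by_contra hgt
      push_neg at hgt
      have hroot_v : parent^[Nat.find h] t = root := by
        have h1 : Nat.find h = (Nat.find h - Nat.find (hreach' t)) + Nat.find (hreach' t) :=
          (Nat.sub_add_cancel hgt.le).symm
        rw [h1, Function.iterate_add_apply, Nat.find_spec (hreach' t),
          Function.iterate_fixed hroot]
      exact hv (by rw [← Nat.find_spec h, hroot_v])
  -- the measure
  set M : V → ℕ := fun u =>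
    if h : t ∈ subtreeOf parent u then Nat.find (show ∃ n, parent^[n] t = u from h)
    else Nat.find (hreach' u) + Nat.find (hreach' t) + 1 with hMdef
  -- key step lemma
  have hstep : ∀ u, u ≠ t → M (f u) < M u := by
    intro u hu
    by_cases h : t ∈ subtreeOf parent u
    · -- descend toward t
      have h' : ∃ n, parent^[n] t = u := h
      set n := Nat.find h' with hn
      have hn0 : 0 < n := by
        rcases Nat.eq_zero_or_pos n with h0 | h0
        · have hs := Nat.find_spec h'
          rw [← hn, h0] at hs
          exact absurd hs.symm hu
        · exact h0
      set c := parent^[n - 1] t with hcdef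
      have hcparent : parent c = u := by
        have h5 : parent^[(n - 1) + 1] t = parent (parent^[n - 1] t) :=
          Function.iterate_succ_apply' parent (n - 1) t
        rw [Nat.sub_add_cancel hn0] at h5
        show parent (parent^[n - 1] t) = u
        rw [← h5]
        exact Nat.find_spec h'
      have hcsub : t ∈ subtreeOf parent c := ⟨n - 1, rfl⟩
      have hcne : c ≠ u := by
        intro hcu
        have : parent^[n - 1] t = u := hcdef ▸ hcu
        exact absurd this (Nat.find_min h' (Nat.sub_lt hn0 one_pos))
      have hex : ∃ c : V, parent c = u ∧ c ≠ u ∧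
          spvc t ∈ Set.Icc (spvc c) (maxRange parent spvc c) ∧ next u (spvc t) = c :=
        by
        rcases hnext u (spvc t) with hcase | ⟨hno, _⟩
        · exact hcase
        · exact absurd ⟨c, hcparent, hcne, (hmem_iff c).mpr hcsub⟩ hno
      obtain ⟨c', hc'parent, hc'ne, hc'mem, hc'next⟩ := hex
      have hc'sub : t ∈ subtreeOf parent c' := (hmem_iff c').mp hc'mem
      have hcc' : c' = c := hchild_unique u c' c hc'parent hc'ne hcparent hcne hc'sub hcsub
      have hfu : f u = c := by rw [hfdef]; simpa [hcc'] using hc'next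
      rw [hfu]
      have hM_u : M u = n := by rw [hMdef]; simp only; rw [dif_pos h]
      have hM_c : M c = Nat.find (show ∃ m, parent^[m] t = c from hcsub) := by
        rw [hMdef]; simp only; rw [dif_pos hcsub]
      rw [hM_u, hM_c]
      exact lt_of_le_of_lt (Nat.find_le (show parent^[n-1] t = c from rfl))
        (Nat.sub_lt hn0 one_pos)
    · -- go up toward root
      have huroot : u ≠ root := by
        intro hr
        exact h (hr ▸ hreach t)
      have hno : ¬ ∃ c : V, parent c = u ∧ c ≠ u ∧
          spvc t ∈ Set.Icc (spvc c) (maxRange parent spvc c) := by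
        rintro ⟨c, hc, hcne, hcmem⟩
        exact h (hsub_up c u hc ((hmem_iff c).mp hcmem))
      have hfu : f u = parent u := by
        rcases hnext u (spvc t) with ⟨c, hc, hcne, hcmem, _⟩ | ⟨_, hp⟩
        · exact absurd ⟨c, hc, hcne, hcmem⟩ hno
        · exact hp
      rw [hfu]
      have hM_u : M u = Nat.find (hreach' u) + Nat.find (hreach' t) + 1 := by
        rw [hMdef]; simp only; rw [dif_neg h]
      rw [hM_u]
      by_cases h2 : t ∈ subtreeOf parent (parent u)
      · have hM_p : M (parent u) = Nat.find (show ∃ n, parent^[n] t = parent u from h2) := by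
          rw [hMdef]; simp only; rw [dif_pos h2]
        rw [hM_p]
        calc Nat.find (show ∃ n, parent^[n] t = parent u from h2)
            ≤ Nat.find (hreach' t) := hdist_le _ _
          _ < Nat.find (hreach' u) + Nat.find (hreach' t) + 1 := by omega
      · have hM_p : M (parent u) = Nat.find (hreach' (parent u)) + Nat.find (hreach' t) + 1 := by
          rw [hMdef]; simp only; rw [dif_neg h2]
        rw [hM_p]
        have := hdpt_parent u huroot
        omega
  -- the measure strictly decreases along the walk
  have hchain : ∀ j, j ≤ k → ∀ i, i < j → M (f^[j] s) < M (f^[i] s) := by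
    intro j
    induction j with
    | zero => intro _ i hi; omega
    | succ j ih =>
      intro hjk i hij
      have hjt : f^[j] s ≠ t := hfirst j (by omega)
      have hdec : M (f^[j + 1] s) < M (f^[j] s) := by
        rw [Function.iterate_succ_apply']
        exact hstep _ hjt
      rcases Nat.lt_or_ge i j with hij' | hij'
      · exact lt_trans hdec (ih (by omega) i hij')
      · have : i = j := by omega
        rwa [this]
  -- conclude nodup
  apply List.Nodup.map_on _ List.nodup_range
  intro x hx y hy hxy
  rw [List.mem_range] at hx hy
  rcases lt_trichotomy x y with hlt | heq | hgt
  · exact absurd (congrArg M hxy) (Nat.ne_of_gt (hchain y (by omega) x hlt))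
  · exact heq
  · exact absurd (congrArg M hxy) (Nat.ne_of_lt (hchain x (by omega) y hgt))
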